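/- For every n ∈ {1,2,3,4}, there is no n-tuple of strictly positive integers (a_1,…,a_n) such that M_n(a_1,…,a_n) = S or M_n(a_1,…,a_n) = −S. -/

import Mathlib

/-- The elementary matrix `[[a, -1], [1, 0]]`. -/
def genMat (a : ℤ) : Matrix (Fin 2) (Fin 2) ℤ := !![a, -1; 1, 0]

/-- `Mprod [a₁, …, aₙ] = [[aₙ,-1],[1,0]] ⋯ [[a₁,-1],[1,0]]`. -/
def Mprod (l : List ℤ) : Matrix (Fin 2) (Fin 2) ℤ := ((l.map genMat).reverse).prod
/-- For `n ∈ {1,2,3,4}` the equations `Mₙ(a₁,…,aₙ) = ±S` have no positive solution. -/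
theorem stmt6 (l : List ℤ) (h1 : 1 ≤ l.length) (h4 : l.length ≤ 4)
    (hpos : ∀ x ∈ l, 0 < x) :
    Mprod l ≠ !![0, -1; 1, 0] ∧ Mprod l ≠ -!![0, -1; 1, 0] := by
  rcases l with _ | ⟨a, _ | ⟨b, _ | ⟨c, _ | ⟨d, _ | ⟨e, t⟩⟩⟩⟩⟩
  · simp at h1
  · have ha := hpos a (by simp)
    constructor <;> intro h <;>
    · rw [show Mprod [a] = genMat a * 1 by simp [Mprod, List.prod_cons]] at h
      have h00 := congrFun (congrFun h 0) 0
      simp [genMat, Matrix.mul_apply, Fin.sum_univ_two] at h00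
      omega
  · have ha := hpos a (by simp)
    have hb := hpos b (by simp)
    constructor <;> intro h <;>
    · rw [show Mprod [a, b] = genMat b * (genMat a * 1) by
        simp [Mprod, List.prod_cons]] at h
      have h11 := congrFun (congrFun h 1) 1
      simp [genMat, Matrix.mul_apply, Fin.sum_univ_two] at h11
  · have ha := hpos a (by simp)
    have hb := hpos b (by simp)
    have hc := hpos c (by simp)
    constructor <;> intro h <;>
    · rw [show Mprod [a, b, c] = genMat c * (genMat b * (genMat a * 1)) by
        simp [Mprod, List.prod_cons]] at h
      have h11 := congrFun (congrFun h 1) 1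
      simp [genMat, Matrix.mul_apply, Fin.sum_univ_two] at h11
      omega
  · have ha := hpos a (by simp)
    have hb := hpos b (by simp)
    have hc := hpos c (by simp)
    have hd := hpos d (by simp)
    constructor <;> intro h <;>
    · rw [show Mprod [a, b, c, d] = genMat d * (genMat c * (genMat b * (genMat a * 1))) by
        simp [Mprod, List.prod_cons]] at h
      have h00 := congrFun (congrFun h 0) 0
      have h10 := congrFun (congrFun h 1) 0
      have h11 := congrFun (congrFun h 1) 1
      simp [genMat, Matrix.mul_apply, Fin.sum_univ_two] at h00 h10 h11
      nlinarith [mul_pos hb hc, mul_pos ha hb, mul_pos hd (mul_pos hb hc)]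
  · simp at h4
    omega
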